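/- Let φ : ℂ → ℂ² be the map t ↦ (t^d, (t-1)^(d-1)) for d ≥ 1. Then for t ≠ s, φ(t) = φ(s) if and only if there exist a d-th root of unity ξ ≠ 1 and a (d-1)-th root of unity η ≠ 1 such that t = (1 - η)/(ξ - η) and s = ξ·t. -/
import Mathlib


/-- For `φ t = (t^d, (t-1)^(d-1))` with `d ≥ 1` and `t ≠ s`, one has `φ t = φ s` iff
there are roots of unity `ξ^d = 1, ξ ≠ 1` and `η^(d-1) = 1, η ≠ 1` with
`t = (1 - η)/(ξ - η)` and `s = ξ * t`. -/
theorem stmt_0 (d : ℕ) (hd : 1 ≤ d) (t s : ℂ) (hts : t ≠ s) :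
    (t ^ d = s ^ d ∧ (t - 1) ^ (d - 1) = (s - 1) ^ (d - 1)) ↔
      ∃ ξ η : ℂ, ξ ^ d = 1 ∧ ξ ≠ 1 ∧ η ^ (d - 1) = 1 ∧ η ≠ 1 ∧
        t = (1 - η) / (ξ - η) ∧ s = ξ * t := by
  constructor
  · rintro ⟨h1, h2⟩
    rcases Nat.lt_or_ge d 2 with h | h
    · interval_cases d
      simp at h1
      exact absurd h1 hts
    have hd1 : d - 1 ≠ 0 := by omega
    have hdd : d ≠ 0 := by omega
    have ht0 : t ≠ 0 := by
      intro h0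
      apply hts
      rw [h0] at h1 ⊢
      simp only [zero_pow hdd] at h1
      exact ((pow_eq_zero_iff hdd).mp h1.symm).symm
    have ht1 : t - 1 ≠ 0 := by
      intro h0
      apply hts
      rw [sub_eq_zero] at h0
      rw [h0] at h2 ⊢
      simp only [sub_self, zero_pow hd1] at h2
      have := (pow_eq_zero_iff hd1).mp h2.symm
      rw [sub_eq_zero] at this
      exact this.symm
    refine ⟨s / t, (s - 1) / (t - 1), ?_, ?_, ?_, ?_, ?_, ?_⟩
    · rw [div_pow, ← h1, div_self (pow_ne_zero d ht0)]
    · intro h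
      exact hts ((div_eq_one_iff_eq ht0).mp h).symm
    · rw [div_pow, ← h2, div_self (pow_ne_zero _ ht1)]
    · intro h
      have := (div_eq_one_iff_eq ht1).mp h
      exact hts (by linear_combination -this)
    · have hne : s / t - (s - 1) / (t - 1) ≠ 0 := by
        rw [div_sub_div _ _ ht0 ht1, div_ne_zero_iff]
        constructor
        · intro h
          exact hts (by linear_combination h)
        · exact mul_ne_zero ht0 ht1
      rw [eq_div_iff hne]
      field_simp
      ring
    · rw [div_mul_cancel₀ _ ht0]
  · rintro ⟨ξ, η, hξ, hξ1, hη, hη1, hteq, hseq⟩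
    have hne : ξ - η ≠ 0 := by
      intro h
      apply hts
      rw [hteq, hseq, hteq, h, div_zero, mul_zero]
    constructor
    · rw [hseq, mul_pow, hξ, one_mul]
    · have hst : s - 1 = η * (t - 1) := by
        rw [hseq, hteq]
        field_simp
        ring
      rw [hst, mul_pow, hη, one_mul]
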